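/- arXiv:2302.12508 — 4 statements merged into one kernel-verified Lean document; each statement's English description precedes it below -/
import Mathlib

section
/- Let $X \sim \mathrm{Bin}(n, p)$ with $\mu = np$. For any $\delta \in (0, 1/2]$ and $p \in (0, 1/2]$ with $\delta^2 \mu \geq 3$, it holds that $\Pr[X \geq (1+\delta)\mu] \geq e^{-9\delta^2\mu}$ and $\Pr[X \leq (1-\delta)\mu] \geq e^{-9\delta^2\mu}$. -/
open MeasureTheory ProbabilityTheory


namespace BinomAnti

open Real Nat Filter MeasureTheory

lemma stirling_ge (n : ℕ) (hn : 1 ≤ n) : Real.sqrt π ≤ Stirling.stirlingSeq n := by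
  have ht : Filter.Tendsto (Stirling.stirlingSeq ∘ Nat.succ) atTop (nhds (Real.sqrt π)) :=
    (Filter.tendsto_add_atTop_iff_nat 1).mpr Stirling.tendsto_stirlingSeq_sqrt_pi
  have := Stirling.stirlingSeq'_antitone.le_of_tendsto ht (n - 1)
  simpa [Function.comp, Nat.succ_eq_add_one, Nat.sub_add_cancel hn] using this

lemma stirling_le (n : ℕ) (hn : 1 ≤ n) : Stirling.stirlingSeq n ≤ Real.exp 1 / Real.sqrt 2 := by
  have := Stirling.stirlingSeq'_antitone (Nat.zero_le (n-1))
  simpa [Function.comp, Stirling.stirlingSeq_one, Nat.succ_eq_add_one,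
    Nat.sub_add_cancel hn] using this

lemma fact_lower (n : ℕ) (hn : 1 ≤ n) :
    Real.sqrt π * Real.sqrt 2 * Real.sqrt n * (n:ℝ)^n ≤ n.factorial * Real.exp 1 ^ n := by
  have h := stirling_ge n hn
  have hn0 : 0 < (n:ℝ) := by exact_mod_cast hn
  rw [Stirling.stirlingSeq, le_div_iff₀ (by positivity)] at h
  calc Real.sqrt π * Real.sqrt 2 * Real.sqrt n * (n:ℝ)^n
      = Real.sqrt π * (Real.sqrt (2*n) * ((n:ℝ)/Real.exp 1)^n) * Real.exp 1 ^ n := by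
        rw [Real.sqrt_mul (by norm_num), div_pow]
        field_simp
    _ ≤ n.factorial * Real.exp 1 ^ n := by
        apply mul_le_mul_of_nonneg_right h (by positivity)

lemma fact_upper (k : ℕ) (hk : 1 ≤ k) :
    (k.factorial : ℝ) * Real.exp 1 ^ k ≤ Real.exp 1 * Real.sqrt k * (k:ℝ)^k := by
  have h := stirling_le k hk
  have hk0 : 0 < (k:ℝ) := by exact_mod_cast hk
  rw [Stirling.stirlingSeq, div_le_div_iff₀ (by positivity) (by positivity)] at h
  calc (k.factorial : ℝ) * Real.exp 1 ^ k
      ≤ Real.exp 1 * (Real.sqrt (2*k) * ((k:ℝ)/Real.exp 1)^k) / Real.sqrt 2 * Real.exp 1 ^ k := by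
        rw [div_mul_eq_mul_div, le_div_iff₀ (by positivity)]
        calc (k.factorial:ℝ) * Real.exp 1 ^ k * Real.sqrt 2
            = (k.factorial * Real.sqrt 2) * Real.exp 1 ^ k := by ring
          _ ≤ Real.exp 1 * (Real.sqrt (2*k) * ((k:ℝ)/Real.exp 1)^k) * Real.exp 1 ^ k := by
              apply mul_le_mul_of_nonneg_right _ (by positivity)
              linarith [h]
    _ = Real.exp 1 * Real.sqrt k * (k:ℝ)^k := by
        rw [Real.sqrt_mul (by norm_num), div_pow]
        field_simp

lemma choose_bound {n k j : ℕ} {p q : ℝ} (hn : n = k + j) (hk : 1 ≤ k) (hj : 1 ≤ j)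
    (hp : 0 < p) (hq : 0 < q) :
    Real.sqrt 2 * Real.sqrt π / Real.exp 1 ^ 2 / Real.sqrt k *
      ((n*p/k)^k * (n*q/j)^j) ≤ (n.choose k) * (p^k * q^j) := by
  have hk0 : 0 < (k:ℝ) := by exact_mod_cast hk
  have hj0 : 0 < (j:ℝ) := by exact_mod_cast hj
  have hkn : k ≤ n := by omega
  have hn1 : 1 ≤ n := by omega
  have hn0 : 0 < (n:ℝ) := by exact_mod_cast hn1
  set T := Real.sqrt 2 * Real.sqrt π / Real.exp 1 ^ 2 / Real.sqrt k *
      ((n*p/k)^k * (n*q/j)^j) with hT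
  have hT0 : 0 ≤ T := by positivity
  have hfact : (n.choose k : ℝ) * ((k.factorial : ℝ) * (j.factorial : ℝ)) = n.factorial := by
    have := Nat.choose_mul_factorial_mul_factorial hkn
    have hj' : n - k = j := by omega
    rw [hj'] at this
    exact_mod_cast by rw [← this]; push_cast; ring
  have halg : T * ((Real.exp 1 * Real.sqrt k * (k:ℝ)^k) * (Real.exp 1 * Real.sqrt j * (j:ℝ)^j))
      = Real.sqrt 2 * Real.sqrt π * Real.sqrt j * ((n:ℝ)^n * (p^k * q^j)) := by
    have hsk : Real.sqrt k ≠ 0 := ne_of_gt (Real.sqrt_pos.mpr hk0)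
    rw [hT, div_pow, div_pow, mul_pow, mul_pow]
    rw [show ((n:ℝ))^n = (n:ℝ)^k * (n:ℝ)^j by rw [hn, pow_add]]
    field_simp
  have key : T * ((k.factorial:ℝ) * (j.factorial:ℝ)) * Real.exp 1 ^ n ≤
      (n.factorial : ℝ) * (p^k * q^j) * Real.exp 1 ^ n := by
    calc T * ((k.factorial:ℝ) * (j.factorial:ℝ)) * Real.exp 1 ^ n
        = T * (((k.factorial:ℝ) * Real.exp 1 ^ k) * ((j.factorial:ℝ) * Real.exp 1 ^ j)) := by
          rw [hn, pow_add]; ring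
      _ ≤ T * ((Real.exp 1 * Real.sqrt k * (k:ℝ)^k) * (Real.exp 1 * Real.sqrt j * (j:ℝ)^j)) := by
          apply mul_le_mul_of_nonneg_left _ hT0
          apply mul_le_mul (fact_upper k hk) (fact_upper j hj) (by positivity) (by positivity)
      _ = Real.sqrt 2 * Real.sqrt π * Real.sqrt j * ((n:ℝ)^n * (p^k * q^j)) := halg
      _ ≤ Real.sqrt 2 * Real.sqrt π * Real.sqrt n * ((n:ℝ)^n * (p^k * q^j)) := by
          have : Real.sqrt j ≤ Real.sqrt n := Real.sqrt_le_sqrt (by exact_mod_cast (by omega : j ≤ n))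
          gcongr
      _ = (Real.sqrt π * Real.sqrt 2 * Real.sqrt n * (n:ℝ)^n) * (p^k * q^j) := by ring
      _ ≤ ((n.factorial:ℝ) * Real.exp 1 ^ n) * (p^k * q^j) := by
          apply mul_le_mul_of_nonneg_right (fact_lower n hn1) (by positivity)
      _ = (n.factorial : ℝ) * (p^k * q^j) * Real.exp 1 ^ n := by ring
  have key2 : T * ((k.factorial:ℝ) * (j.factorial:ℝ)) ≤ (n.factorial : ℝ) * (p^k * q^j) :=
    le_of_mul_le_mul_right key (by positivity)
  rw [← hfact] at key2
  have hkj0 : (0:ℝ) < (k.factorial:ℝ) * (j.factorial:ℝ) := by positivity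
  have key3 : T * ((k.factorial:ℝ) * (j.factorial:ℝ)) ≤
      ((n.choose k : ℝ) * (p^k * q^j)) * ((k.factorial:ℝ) * (j.factorial:ℝ)) := by
    calc T * ((k.factorial:ℝ) * (j.factorial:ℝ)) ≤ _ := key2
      _ = ((n.choose k : ℝ) * (p^k * q^j)) * ((k.factorial:ℝ) * (j.factorial:ℝ)) := by ring
  exact le_of_mul_le_mul_right key3 hkj0

lemma pointmass_lower {n k j : ℕ} {p q : ℝ} (hn : n = k + j) (hk : 1 ≤ k) (hj : 1 ≤ j)
    (hp : 0 < p) (hq : 0 < q) (hpq : p + q = 1) :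
    Real.sqrt 2 * Real.sqrt π / Real.exp 1 ^ 2 / Real.sqrt k *
      Real.exp (-((n:ℝ) * ((k:ℝ)/(n:ℝ) - p)^2 / (p*q))) ≤ (n.choose k) * (p^k * q^j) := by
  have hk0 : 0 < (k:ℝ) := by exact_mod_cast hk
  have hj0 : 0 < (j:ℝ) := by exact_mod_cast hj
  have hn1 : 1 ≤ n := by omega
  have hn0 : 0 < (n:ℝ) := by exact_mod_cast hn1
  have hA0 : 0 < ((n:ℝ)*p/(k:ℝ))^k * ((n:ℝ)*q/(j:ℝ))^j := by positivity
  have hexp : Real.exp (-((n:ℝ) * ((k:ℝ)/(n:ℝ) - p)^2 / (p*q))) ≤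
      ((n:ℝ)*p/(k:ℝ))^k * ((n:ℝ)*q/(j:ℝ))^j := by
    rw [← Real.exp_log hA0]
    apply Real.exp_le_exp.mpr
    rw [Real.log_mul (by positivity) (by positivity), Real.log_pow, Real.log_pow]
    have l1 : Real.log ((k:ℝ)/((n:ℝ)*p)) ≤ (k:ℝ)/((n:ℝ)*p) - 1 :=
      Real.log_le_sub_one_of_pos (by positivity)
    have l2 : Real.log ((j:ℝ)/((n:ℝ)*q)) ≤ (j:ℝ)/((n:ℝ)*q) - 1 :=
      Real.log_le_sub_one_of_pos (by positivity)
    have e1 : Real.log ((n:ℝ)*p/(k:ℝ)) = - Real.log ((k:ℝ)/((n:ℝ)*p)) := by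
      rw [← Real.log_inv, inv_div]
    have e2 : Real.log ((n:ℝ)*q/(j:ℝ)) = - Real.log ((j:ℝ)/((n:ℝ)*q)) := by
      rw [← Real.log_inv, inv_div]
    rw [e1, e2]
    have hjr : (j:ℝ) = (n:ℝ) - (k:ℝ) := by
      have : (n:ℝ) = (k:ℝ) + (j:ℝ) := by exact_mod_cast hn
      linarith
    have keyeq : (k:ℝ)*((k:ℝ)/((n:ℝ)*p) - 1) + (j:ℝ)*((j:ℝ)/((n:ℝ)*q) - 1)
        = (n:ℝ) * ((k:ℝ)/(n:ℝ) - p)^2 / (p*q) := by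
      rw [hjr]
      have hq1 : q = 1 - p := by linarith
      rw [hq1]
      have hp1 : p < 1 := by linarith
      have h1 : (1:ℝ) - p ≠ 0 := by linarith
      rw [eq_div_iff (by positivity)]
      field_simp
      ring
    nlinarith [mul_le_mul_of_nonneg_left l1 (le_of_lt hk0),
      mul_le_mul_of_nonneg_left l2 (le_of_lt hj0)]
  calc Real.sqrt 2 * Real.sqrt π / Real.exp 1 ^ 2 / Real.sqrt k *
        Real.exp (-((n:ℝ) * ((k:ℝ)/(n:ℝ) - p)^2 / (p*q)))
      ≤ Real.sqrt 2 * Real.sqrt π / Real.exp 1 ^ 2 / Real.sqrt k *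
        (((n:ℝ)*p/(k:ℝ))^k * ((n:ℝ)*q/(j:ℝ))^j) := by
        apply mul_le_mul_of_nonneg_left hexp (by positivity)
    _ ≤ (n.choose k) * (p^k * q^j) := choose_bound hn hk hj hp hq

lemma binom_toReal {p : ℝ} (hp0 : 0 ≤ p) (hp1 : p ≤ 1) (hple : Real.toNNReal p ≤ 1) (n : ℕ)
    (x : Fin (n+1)) :
    ((PMF.binomial (Real.toNNReal p) hple n) x).toReal
      = (n.choose (x:ℕ)) * (p^(x:ℕ) * (1-p)^(n - (x:ℕ))) := by
  rw [PMF.binomial_apply]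
  rw [Fin.val_last]
  rw [ENNReal.toReal_mul, ENNReal.toReal_mul, ENNReal.toReal_pow, ENNReal.toReal_pow,
    ENNReal.toReal_sub_of_le (ENNReal.coe_le_one_iff.mpr hple) ENNReal.one_ne_top,
    ENNReal.coe_toReal, Real.coe_toNNReal _ hp0, ENNReal.toReal_one, ENNReal.toReal_natCast]
  ring

lemma meas_lower {N : ℕ} (P : PMF (Fin N)) (S : Set (Fin N)) (F : Finset (Fin N))
    (hF : ∀ x ∈ F, x ∈ S) :
    ∑ x ∈ F, (P x).toReal ≤ (P.toMeasure S).toReal := by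
  have h1 : P.toMeasure ↑F ≤ P.toMeasure S := measure_mono hF
  rw [PMF.toMeasure_apply_finset] at h1
  have h2 : ∑ x ∈ F, (P x).toReal = (∑ x ∈ F, P x).toReal :=
    (ENNReal.toReal_sum (fun a _ => P.apply_ne_top a)).symm
  rw [h2]
  exact ENNReal.toReal_mono (measure_ne_top _ _) h1

lemma exp_neg_three_le : Real.exp (-3) ≤ 1/20 := by
  have h4 : Real.exp 3 = Real.exp 1 * Real.exp 1 * Real.exp 1 := by
    rw [← Real.exp_add, ← Real.exp_add]; norm_num
  have he1 : (2.715:ℝ) ≤ Real.exp 1 := by linarith [Real.exp_one_gt_d9]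
  have he0 : (0:ℝ) < Real.exp 1 := Real.exp_pos 1
  have ha : (2.715:ℝ)*2.715 ≤ Real.exp 1 * Real.exp 1 := by nlinarith
  have hb : (2.715:ℝ)*2.715*2.715 ≤ Real.exp 1 * Real.exp 1 * Real.exp 1 := by nlinarith
  have h2 : (20:ℝ) ≤ Real.exp 3 := by rw [h4]; nlinarith
  rw [Real.exp_neg]
  have hz : 0 < (Real.exp 3)⁻¹ := by positivity
  have hinv : Real.exp 3 * (Real.exp 3)⁻¹ = 1 := mul_inv_cancel₀ (ne_of_gt (Real.exp_pos 3))
  nlinarith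

lemma const_ge : (0.3:ℝ) ≤ Real.sqrt 2 * Real.sqrt π / Real.exp 1 ^ 2 := by
  have s2 : (1.414:ℝ) ≤ Real.sqrt 2 := by
    nlinarith [Real.sq_sqrt (by norm_num : (0:ℝ) ≤ 2), Real.sqrt_nonneg 2]
  have sπ : (1.73:ℝ) ≤ Real.sqrt π := by
    nlinarith [Real.sq_sqrt (le_of_lt Real.pi_pos), Real.sqrt_nonneg π, Real.pi_gt_three]
  have he : Real.exp 1 ≤ 2.7182818286 := Real.exp_one_lt_d9.le
  rw [le_div_iff₀ (by positivity)]
  nlinarith [Real.exp_pos 1]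

lemma tail_bound (n : ℕ) (p δ : ℝ) (hp0 : 0 < p) (hp2 : p ≤ 1/2) (hδ0 : 0 < δ)
    (h3 : 3 ≤ δ^2*(n*p)) (hple : Real.toNNReal p ≤ 1)
    (S : Set (Fin (n+1))) (a m : ℕ)
    (hcard : 2*((n:ℝ)*p) ≤ (6*(m:ℝ))^2)
    (hmem : ∀ k : ℕ, a ≤ k → k < a + m → 1 ≤ k ∧ k < n ∧ (k:ℝ) ≤ 2*((n:ℝ)*p) ∧
        ((k:ℝ)/(n:ℝ) - p)^2 ≤ 4*δ^2*p^2)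
    (hS : ∀ x : Fin (n+1), a ≤ (x:ℕ) → (x:ℕ) < a + m → x ∈ S) :
    Real.exp (-9*δ^2*((n:ℝ)*p)) ≤
      ((PMF.binomial (Real.toNNReal p) hple n).toMeasure S).toReal := by
  have hp1 : p < 1 := by linarith
  have hμ0 : 0 < (n:ℝ)*p := by nlinarith [sq_nonneg δ]
  have hn0 : 0 < (n:ℝ) := by nlinarith [Nat.cast_nonneg (α := ℝ) n]
  have hm0 : 0 < (m:ℝ) := by nlinarith
  set c : ℝ := Real.sqrt 2 * Real.sqrt π / Real.exp 1 ^ 2 / Real.sqrt (2*((n:ℝ)*p)) *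
      Real.exp (-(8*δ^2*((n:ℝ)*p))) with hc
  -- the interval as a finset of Fin (n+1)
  have hlt : ∀ t ∈ Finset.Ico a (a+m), t < n + 1 := by
    intro t ht
    rw [Finset.mem_Ico] at ht
    exact Nat.lt_succ_of_lt (hmem t ht.1 ht.2).2.1
  set F : Finset (Fin (n+1)) := (Finset.Ico a (a+m)).attachFin hlt with hF
  have hFcard : F.card = m := by
    rw [hF, Finset.card_attachFin, Nat.card_Ico]; omega
  set P := PMF.binomial (Real.toNNReal p) hple n with hP
  -- per element bound
  have hper : ∀ x ∈ F, c ≤ (P x).toReal := by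
    intro x hx
    rw [hF, Finset.mem_attachFin, Finset.mem_Ico] at hx
    obtain ⟨hk1, hkn, hk2, ht2⟩ := hmem (x:ℕ) hx.1 hx.2
    rw [hP, binom_toReal hp0.le hp1.le hple n x]
    have hq0 : 0 < 1 - p := by linarith
    refine le_trans ?_ (pointmass_lower (n := n) (k := (x:ℕ)) (j := n - (x:ℕ))
      (by omega) hk1 (by omega) hp0 hq0 (by ring))
    rw [hc]
    have hfrac : (n:ℝ) * ((x:ℕ)/(n:ℝ) - p)^2 / (p*(1-p)) ≤ 8*δ^2*((n:ℝ)*p) := by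
      rw [div_le_iff₀ (by positivity)]
      nlinarith [mul_le_mul_of_nonneg_left ht2 hn0.le,
        mul_nonneg (mul_nonneg (mul_nonneg (sq_nonneg δ) (sq_nonneg p)) hn0.le)
          (by linarith : (0:ℝ) ≤ 1 - 2*p)]
    gcongr <;> first
      | exact Real.sqrt_le_sqrt hk2
      | linarith [hfrac]
      | positivity
  -- sum bound
  have hsum : (m:ℝ) * c ≤ (P.toMeasure S).toReal := by
    calc (m:ℝ) * c = F.card • c := by rw [hFcard, nsmul_eq_mul]
      _ ≤ ∑ x ∈ F, (P x).toReal := Finset.card_nsmul_le_sum F _ c hper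
      _ ≤ (P.toMeasure S).toReal := by
          apply meas_lower
          intro x hxF
          rw [hF, Finset.mem_attachFin, Finset.mem_Ico] at hxF
          exact hS x hxF.1 hxF.2
  -- numeric bound : exp(-9 δ² μ) ≤ m * c
  refine le_trans ?_ hsum
  have hC : (0.3:ℝ) ≤ √2 * √π / Real.exp 1 ^ 2 := const_ge
  have hsq : Real.sqrt (2*((n:ℝ)*p)) ≤ 6*(m:ℝ) := by
    have := Real.sqrt_le_sqrt hcard
    rwa [Real.sqrt_sq (by positivity)] at this
  have hsq0 : 0 < Real.sqrt (2*((n:ℝ)*p)) := Real.sqrt_pos.mpr (by positivity)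
  have hm20 : (1/20 : ℝ) ≤ (m:ℝ) * (√2 * √π / Real.exp 1 ^ 2 / Real.sqrt (2*((n:ℝ)*p))) := by
    have h1 : (0.3:ℝ)/(6*(m:ℝ)) ≤ √2 * √π / Real.exp 1 ^ 2 / Real.sqrt (2*((n:ℝ)*p)) := by
      gcongr <;> first
        | exact hsq
        | exact hC
        | positivity
    calc (1/20:ℝ) = (m:ℝ) * ((0.3:ℝ)/(6*(m:ℝ))) := by field_simp; ring
      _ ≤ _ := by apply mul_le_mul_of_nonneg_left h1 hm0.le
  have hexp3 : Real.exp (-(δ^2*((n:ℝ)*p))) ≤ 1/20 := by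
    have h1 : Real.exp (-(δ^2*((n:ℝ)*p))) ≤ Real.exp (-3) := by
      apply Real.exp_le_exp.mpr; linarith
    linarith [exp_neg_three_le]
  calc Real.exp (-9*δ^2*((n:ℝ)*p))
      = Real.exp (-(δ^2*((n:ℝ)*p))) * Real.exp (-(8*δ^2*((n:ℝ)*p))) := by
        rw [← Real.exp_add]; ring_nf
    _ ≤ (1/20) * Real.exp (-(8*δ^2*((n:ℝ)*p))) := by
        apply mul_le_mul_of_nonneg_right hexp3 (Real.exp_pos _).le
    _ ≤ ((m:ℝ) * (√2 * √π / Real.exp 1 ^ 2 / Real.sqrt (2*((n:ℝ)*p)))) *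
          Real.exp (-(8*δ^2*((n:ℝ)*p))) := by
        apply mul_le_mul_of_nonneg_right hm20 (Real.exp_pos _).le
    _ = (m:ℝ) * c := by rw [hc]; ring

end BinomAnti


set_option maxHeartbeats 2000000 in
open BinomAnti in
/-- Anti-concentration (reverse Chernoff) bound for the binomial
distribution `Bin(n, p)` with mean `μ = np`: for `δ ∈ (0, 1/2]`, `p ∈ (0, 1/2]` with
`δ²μ ≥ 3`, we have `Pr[X ≥ (1+δ)μ] ≥ e^{-9δ²μ}` and `Pr[X ≤ (1-δ)μ] ≥ e^{-9δ²μ}`. -/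
theorem binomial_anti_concentration
    (n : ℕ) (p δ : ℝ) (hp0 : 0 < p) (hp2 : p ≤ 1 / 2)
    (hδ0 : 0 < δ) (hδ2 : δ ≤ 1 / 2) (h3 : 3 ≤ δ ^ 2 * (n * p)) :
    Real.exp (-9 * δ ^ 2 * (n * p)) ≤
      ((PMF.binomial (Real.toNNReal p)
            (by rw [Real.toNNReal_le_one]; linarith) n).toMeasure
          {k : Fin (n + 1) | (1 + δ) * (n * p) ≤ (k : ℝ)}).toReal ∧
    Real.exp (-9 * δ ^ 2 * (n * p)) ≤
      ((PMF.binomial (Real.toNNReal p)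
            (by rw [Real.toNNReal_le_one]; linarith) n).toMeasure
          {k : Fin (n + 1) | (k : ℝ) ≤ (1 - δ) * (n * p)}).toReal := by
  have hμ0 : 0 < (n:ℝ)*p := by nlinarith [sq_nonneg δ]
  have hn0 : 0 < (n:ℝ) := by nlinarith [Nat.cast_nonneg (α := ℝ) n]
  have hδ4 : δ^2 ≤ 1/4 := by nlinarith
  have hμ12 : 12 ≤ (n:ℝ)*p := by nlinarith
  have hδμ6 : 6 ≤ δ*((n:ℝ)*p) := by nlinarith [mul_pos hδ0 hμ0]
  have h2μn : 2*((n:ℝ)*p) ≤ (n:ℝ) := by nlinarith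
  set μ : ℝ := (n:ℝ)*p with hμ
  set m : ℕ := ⌊δ*μ⌋₊ - 2 with hm
  have hfl6 : 6 ≤ ⌊δ*μ⌋₊ := Nat.le_floor (by exact_mod_cast hδμ6)
  have hmcast : (m:ℝ) = (⌊δ*μ⌋₊:ℝ) - 2 := by
    rw [hm, Nat.cast_sub (by omega)]; norm_num
  have hm_lb : δ*μ - 3 ≤ (m:ℝ) := by
    have := Nat.sub_one_lt_floor (δ*μ)
    rw [hmcast]; linarith
  have hm_ub : (m:ℝ) ≤ δ*μ - 2 := by
    have := Nat.floor_le (by positivity : 0 ≤ δ*μ)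
    rw [hmcast]; linarith
  have hmhalf : δ*μ/2 ≤ (m:ℝ) := by linarith
  have hcard : 2*((n:ℝ)*p) ≤ (6*(m:ℝ))^2 := by
    have hsq : (δ*μ/2)^2 ≤ (m:ℝ)^2 := by nlinarith
    nlinarith [h3, hμ0]
  constructor
  · -- upper tail
    apply tail_bound n p δ hp0 hp2 hδ0 h3 _ _ ⌈(1+δ)*μ⌉₊ m hcard
    · intro k hk1 hk2
      have hak : (1+δ)*μ ≤ (k:ℝ) :=
        le_trans (Nat.le_ceil _) (by exact_mod_cast hk1)
      have haub : (⌈(1+δ)*μ⌉₊:ℝ) < (1+δ)*μ + 1 := Nat.ceil_lt_add_one (by positivity)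
      have hkub : (k:ℝ) ≤ (1+2*δ)*μ - 1 := by
        have h1 : (k:ℝ) + 1 ≤ (⌈(1+δ)*μ⌉₊:ℝ) + (m:ℝ) := by exact_mod_cast hk2
        linarith
      have hk1' : 1 ≤ k := by
        have : (1:ℝ) ≤ (k:ℝ) := by nlinarith
        exact_mod_cast this
      have hkn : k < n := by
        have : (k:ℝ) < (n:ℝ) := by nlinarith
        exact_mod_cast this
      refine ⟨hk1', hkn, by nlinarith, ?_⟩
      have hl : (1+δ)*p ≤ (k:ℝ)/(n:ℝ) := by
        rw [le_div_iff₀ hn0]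
        calc (1+δ)*p*(n:ℝ) = (1+δ)*μ := by rw [hμ]; ring
          _ ≤ (k:ℝ) := hak
      have hu : (k:ℝ)/(n:ℝ) ≤ (1+2*δ)*p := by
        rw [div_le_iff₀ hn0]
        calc (k:ℝ) ≤ (1+2*δ)*μ - 1 := hkub
          _ ≤ (1+2*δ)*p*(n:ℝ) := by rw [hμ]; ring_nf; linarith
      nlinarith [mul_nonneg hδ0.le hp0.le]
    · intro x hx1 hx2
      simp only [Set.mem_setOf_eq]
      calc (1+δ)*((n:ℝ)*p) ≤ (⌈(1+δ)*μ⌉₊:ℝ) := Nat.le_ceil _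
        _ ≤ ((x:ℕ):ℝ) := by exact_mod_cast hx1
  · -- lower tail
    set a : ℕ := max 1 ⌈(1-2*δ)*μ⌉₊ with ha
    have h12δ : 0 ≤ (1-2*δ)*μ := by nlinarith
    have ha_ub : (a:ℝ) ≤ (1-2*δ)*μ + 1 := by
      rw [ha, Nat.cast_max]
      apply max_le (by norm_num; nlinarith) (Nat.ceil_lt_add_one h12δ).le
    have ha_lb : (1-2*δ)*μ ≤ (a:ℝ) := by
      refine le_trans (Nat.le_ceil _) ?_
      exact_mod_cast Nat.le_max_right 1 _
    apply tail_bound n p δ hp0 hp2 hδ0 h3 _ _ a m hcard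
    · intro k hk1 hk2
      have hak : (1-2*δ)*μ ≤ (k:ℝ) :=
        le_trans ha_lb (by exact_mod_cast hk1)
      have hkub : (k:ℝ) ≤ (1-δ)*μ - 2 := by
        have h1 : (k:ℝ) + 1 ≤ (a:ℝ) + (m:ℝ) := by exact_mod_cast hk2
        linarith
      have hk1' : 1 ≤ k := le_trans (Nat.le_max_left 1 _) hk1
      have hkn : k < n := by
        have : (k:ℝ) < (n:ℝ) := by nlinarith
        exact_mod_cast this
      refine ⟨hk1', hkn, by nlinarith, ?_⟩
      have hl : (1-2*δ)*p ≤ (k:ℝ)/(n:ℝ) := by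
        rw [le_div_iff₀ hn0]
        calc (1-2*δ)*p*(n:ℝ) = (1-2*δ)*μ := by rw [hμ]; ring
          _ ≤ (k:ℝ) := hak
      have hu : (k:ℝ)/(n:ℝ) ≤ (1-δ)*p := by
        rw [div_le_iff₀ hn0]
        calc (k:ℝ) ≤ (1-δ)*μ - 2 := hkub
          _ ≤ (1-δ)*p*(n:ℝ) := by rw [hμ]; ring_nf; linarith
      nlinarith [mul_nonneg hδ0.le hp0.le]
    · intro x hx1 hx2
      simp only [Set.mem_setOf_eq]
      have hkub : ((x:ℕ):ℝ) ≤ (1-δ)*μ - 2 := by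
        have h1 : ((x:ℕ):ℝ) + 1 ≤ (a:ℝ) + (m:ℝ) := by exact_mod_cast hx2
        linarith
      calc ((x : Fin (n+1)) : ℝ) = ((x:ℕ):ℝ) := by norm_cast
        _ ≤ (1-δ)*((n:ℝ)*p) := by rw [← hμ]; linarith
end

section
/- In the Undecided State Dynamics with $k$ opinions, let $u^* = n(k-1)/(2k-1)$ and let $\epsilon \geq 0$. If the current number of undecided agents satisfies $u \geq u^* + \epsilon n$, then the conditional probability that the number of undecided agents increases (given that it changes) is at most $1/2 - \epsilon/2$. -/
/-- The number of undecided agents in a configuration of the USD. -/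
def undecidedCount {n k : ℕ} (σ : Fin n → Option (Fin k)) : ℕ :=
  (Finset.univ.filter fun a => σ a = none).card

/-- The support of opinion `i` in a configuration of the USD. -/
def opinionSupport {n k : ℕ} (σ : Fin n → Option (Fin k)) (i : Fin k) : ℕ :=
  (Finset.univ.filter fun a => σ a = some i).card

lemma usd_sum_support {n k : ℕ} (σ : Fin n → Option (Fin k)) :
    undecidedCount σ + ∑ i, opinionSupport σ i = n := by
  have h := Finset.card_eq_sum_card_fiberwise
    (f := σ) (s := Finset.univ) (t := (Finset.univ : Finset (Option (Fin k))))
    (fun x _ => Finset.mem_univ _)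
  rw [Finset.card_univ, Fintype.card_fin, Fintype.sum_option] at h
  exact h.symm


set_option maxHeartbeats 1600000 in
/-- In the USD with `k` opinions, let `u* = n(k-1)/(2k-1)` and `ε ≥ 0`.
If the current number of undecided agents satisfies `u ≥ u* + εn`, then the conditional
probability that the number of undecided agents increases, given that it changes
(`p₊/(p₊ + p₋)` with `p₊ = ((n-u)² - ∑ xᵢ²)/n²` and `p₋ = u(n-u)/n²`), is at most
`1/2 - ε/2`. -/
theorem usd_undecided_increase_conditional_bound
    {n k : ℕ} (hn : 0 < n) (hk : 0 < k) (σ : Fin n → Option (Fin k))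
    (ε : ℝ) (hε : 0 ≤ ε)
    (hu : (n : ℝ) * ((k : ℝ) - 1) / (2 * (k : ℝ) - 1) + ε * n
      ≤ (undecidedCount σ : ℝ)) :
    (((((n : ℝ) - undecidedCount σ) ^ 2 - ∑ i, (opinionSupport σ i : ℝ) ^ 2) / n ^ 2) /
      ((((n : ℝ) - undecidedCount σ) ^ 2 - ∑ i, (opinionSupport σ i : ℝ) ^ 2) / n ^ 2
        + (undecidedCount σ : ℝ) * ((n : ℝ) - undecidedCount σ) / n ^ 2))
      ≤ 1 / 2 - ε / 2 := by
  have hk1 : (1 : ℝ) ≤ (k : ℝ) := by exact_mod_cast hk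
  have hn0 : (0 : ℝ) < (n : ℝ) := by exact_mod_cast hn
  have h2k : (0 : ℝ) < 2 * (k : ℝ) - 1 := by linarith
  set u : ℝ := (undecidedCount σ : ℝ) with hudef
  set r2 : ℝ := ∑ i, (opinionSupport σ i : ℝ) ^ 2 with hr2def
  set m : ℝ := (n : ℝ) - u with hmdef
  -- the sum of supports
  have hsum : (∑ i, (opinionSupport σ i : ℝ)) = m := by
    have := usd_sum_support σ
    have : (u + ∑ i, (opinionSupport σ i : ℝ)) = (n : ℝ) := by
      rw [hudef]
      push_cast [← this]
      ring
    linarith [this]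
  have hu0 : 0 ≤ u := by positivity
  have hun : u ≤ (n : ℝ) := by
    have h := usd_sum_support σ
    have h' : undecidedCount σ ≤ n := by omega
    rw [hudef]; exact_mod_cast h'
  have hm0 : 0 ≤ m := by simp only [hmdef]; linarith
  -- Cauchy-Schwarz: m^2 ≤ k * r2
  have hCS : m ^ 2 ≤ (k : ℝ) * r2 := by
    have := sq_sum_le_card_mul_sum_sq (s := (Finset.univ : Finset (Fin k)))
      (f := fun i => (opinionSupport σ i : ℝ))
    simpa [hsum, Finset.card_univ] using this
  -- r2 ≤ m^2
  have hr2m : r2 ≤ m ^ 2 := by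
    have := Finset.sum_sq_le_sq_sum_of_nonneg (s := (Finset.univ : Finset (Fin k)))
      (f := fun i => (opinionSupport σ i : ℝ)) (fun i _ => by positivity)
    simpa [hsum] using this
  set A : ℝ := m ^ 2 - r2 with hAdef
  set B : ℝ := u * m with hBdef
  have hA0 : 0 ≤ A := by simp only [hAdef]; linarith
  have hB0 : 0 ≤ B := mul_nonneg hu0 hm0
  -- clear the (2k-1) denominator in hu
  clear_value u r2 m A B
  have hu' : (n : ℝ) * ((k : ℝ) - 1) + ε * n * (2 * (k : ℝ) - 1) ≤ u * (2 * (k : ℝ) - 1) := by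
    rw [div_add' _ _ _ (ne_of_gt h2k), div_le_iff₀ h2k] at hu
    linarith [hu]
  have hεk : ε * (2 * (k : ℝ) - 1) ≤ (k : ℝ) := by
    nlinarith [hu', hun]
  have hε1 : ε ≤ 1 := by nlinarith [hεk, mul_nonneg (by linarith : (0:ℝ) ≤ 2*(k:ℝ)-1) (by linarith : (0:ℝ) ≤ (k:ℝ)-1)]
  have hn2 : (0:ℝ) < (n:ℝ)^2 := by positivity
  rw [← add_div]
  rcases eq_or_lt_of_le (add_nonneg hA0 hB0) with hAB | hAB
  · have hA : A = 0 := by linarith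
    rw [hA]
    simp only [zero_div]
    linarith
  · -- main case: the key inequality (1+ε)A ≤ (1-ε)B
    have hkA : (k : ℝ) * A ≤ ((k : ℝ) - 1) * m ^ 2 := by
      simp only [hAdef]; nlinarith [hCS]
    have s1 : (1 + ε) * (2*(k:ℝ)-1) * ((k:ℝ) * A)
        ≤ (1 + ε) * (2*(k:ℝ)-1) * (((k:ℝ) - 1) * m ^ 2) :=
      mul_le_mul_of_nonneg_left hkA (by nlinarith)
    have s3 : m * (2*(k:ℝ)-1) ≤ (n:ℝ) * k - ε * n * (2*(k:ℝ)-1) := by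
      have hme : m * (2*(k:ℝ)-1) = (n:ℝ) * (2*(k:ℝ)-1) - u * (2*(k:ℝ)-1) := by
        rw [hmdef]; ring
      linarith [hu']
    have s4 : (1 + ε) * ((k:ℝ) - 1) * m * (m * (2*(k:ℝ)-1))
        ≤ (1 + ε) * ((k:ℝ) - 1) * m * ((n:ℝ) * k - ε * n * (2*(k:ℝ)-1)) :=
      mul_le_mul_of_nonneg_left s3
        (mul_nonneg (mul_nonneg (by linarith) (by linarith)) hm0)
    have hq : 0 ≤ 2*(k:ℝ)^2 - 2*(k:ℝ) + 1 - ε * (2*(k:ℝ)-1) := by nlinarith [hεk, mul_nonneg (by linarith : (0:ℝ) ≤ 2*(k:ℝ)-1) (by linarith : (0:ℝ) ≤ (k:ℝ)-1)]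
    have s5 : (1 + ε) * ((k:ℝ) - 1) * ((n:ℝ) * k - ε * n * (2*(k:ℝ)-1))
        ≤ (k:ℝ) * (1 - ε) * ((n:ℝ) * ((k:ℝ)-1) + ε * n * (2*(k:ℝ)-1)) := by
      nlinarith [mul_nonneg (mul_nonneg hn0.le hε) hq]
    have s5' : m * ((1 + ε) * ((k:ℝ) - 1) * ((n:ℝ) * k - ε * n * (2*(k:ℝ)-1)))
        ≤ m * ((k:ℝ) * (1 - ε) * ((n:ℝ) * ((k:ℝ)-1) + ε * n * (2*(k:ℝ)-1))) :=
      mul_le_mul_of_nonneg_left s5 hm0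
    have s6 : m * ((k:ℝ) * (1 - ε) * ((n:ℝ) * ((k:ℝ)-1) + ε * n * (2*(k:ℝ)-1)))
        ≤ m * ((k:ℝ) * (1 - ε) * (u * (2*(k:ℝ)-1))) :=
      mul_le_mul_of_nonneg_left
        (mul_le_mul_of_nonneg_left hu' (mul_nonneg (by linarith) (by linarith))) hm0
    have keyc : (1 + ε) * A * ((k:ℝ) * (2*(k:ℝ)-1)) ≤ (1 - ε) * (u * m) * ((k:ℝ) * (2*(k:ℝ)-1)) := by
      nlinarith [s1, s4, s5', s6]
    have key : (1 + ε) * A ≤ (1 - ε) * B := by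
      rw [hBdef]
      exact le_of_mul_le_mul_right keyc (mul_pos (by linarith) h2k)
    rw [div_div_div_cancel_right₀ (ne_of_gt hn2), div_le_iff₀ hAB]
    linarith [key]
end

section
/- Consider the Undecided State Dynamics and define $Z(t) = n - 2u(t) - x_{\max}(t)$, where $u(t)$ is the number of undecided agents and $x_{\max}(t)$ is the maximum opinion support. If $Z(t) \geq 0$ and $u(t) < n/2$, then $\mathbb{E}[Z(t) - Z(t+1) \mid \mathbf{X}(t) = \mathbf{x}] \geq Z(t)/(2n)$. -/
/-- One interaction of the Undecided State Dynamics: in the ordered pair `pr`,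
`pr.1` is the responder and `pr.2` the initiator; `none` is the undecided state. -/
def usdStep {n k : ℕ} (σ : Fin n → Option (Fin k)) (pr : Fin n × Fin n) :
    Fin n → Option (Fin k) := fun a =>
  if a = pr.1 then
    match σ pr.1, σ pr.2 with
    | some i, some j => if i = j then some i else none
    | none, some j => some j
    | s, _ => s
  else σ a

/-- The support of the largest opinion in a configuration. -/
def maxSupport {n k : ℕ} (σ : Fin n → Option (Fin k)) : ℕ :=
  Finset.univ.sup (opinionSupport σ)

/-- The potential `Z = n - 2u - x_max` of a configuration. -/
noncomputable def usdPotential {n k : ℕ} (σ : Fin n → Option (Fin k)) : ℝ :=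
  (n : ℝ) - 2 * undecidedCount σ - maxSupport σ

open Finset

section
variable {n k : ℕ}

lemma card_filter_point (σ : Fin n → Option (Fin k)) (a : Fin n)
    (p : Option (Fin k) → Prop) [DecidablePred p] :
    (Finset.univ.filter fun b => p (σ b)).card
      = ((Finset.univ.erase a).filter fun b => p (σ b)).card + (if p (σ a) then 1 else 0) := by
  have h : (Finset.univ : Finset (Fin n)) = insert a (Finset.univ.erase a) := by
    rw [Finset.insert_erase (Finset.mem_univ a)]
  conv_lhs => rw [h]
  rw [Finset.filter_insert]
  by_cases hpa : p (σ a)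
  · rw [if_pos hpa, if_pos hpa, Finset.card_insert_of_notMem (by simp)]
  · rw [if_neg hpa, if_neg hpa, add_zero]

lemma card_filter_update (σ : Fin n → Option (Fin k)) (a : Fin n) (v : Option (Fin k))
    (p : Option (Fin k) → Prop) [DecidablePred p] :
    (Finset.univ.filter fun b => p (Function.update σ a v b)).card + (if p (σ a) then 1 else 0)
      = (Finset.univ.filter fun b => p (σ b)).card + (if p v then 1 else 0) := by
  rw [card_filter_point (Function.update σ a v) a p, card_filter_point σ a p]
  have he : ((Finset.univ.erase a).filter fun b => p (Function.update σ a v b))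
       = ((Finset.univ.erase a).filter fun b => p (σ b)) := by
    apply Finset.filter_congr
    intro b hb
    rw [Function.update_apply, if_neg (Finset.ne_of_mem_erase hb)]
  rw [he, Function.update_self]
  split_ifs <;> omega

lemma undecidedCount_update (σ : Fin n → Option (Fin k)) (a : Fin n) (v : Option (Fin k)) :
    undecidedCount (Function.update σ a v) + (if σ a = none then 1 else 0)
      = undecidedCount σ + (if v = none then 1 else 0) :=
  card_filter_update σ a v (· = none)

lemma opinionSupport_update (σ : Fin n → Option (Fin k)) (a : Fin n) (v : Option (Fin k)) (i : Fin k) :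
    opinionSupport (Function.update σ a v) i + (if σ a = some i then 1 else 0)
      = opinionSupport σ i + (if v = some i then 1 else 0) :=
  card_filter_update σ a v (· = some i)

lemma opinionSupport_le_maxSupport (σ : Fin n → Option (Fin k)) (i : Fin k) :
    opinionSupport σ i ≤ maxSupport σ :=
  Finset.le_sup (Finset.mem_univ i)

lemma maxSupport_update_none (σ : Fin n → Option (Fin k)) (a : Fin n) (i : Fin k)
    (h : σ a = some i) :
    maxSupport σ ≤ maxSupport (Function.update σ a none)
      + (if opinionSupport σ i = maxSupport σ then 1 else 0) := by
  obtain ⟨l₀, -, hl₀⟩ := Finset.exists_mem_eq_sup (Finset.univ : Finset (Fin k)) ⟨i, Finset.mem_univ i⟩ (opinionSupport σ)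
  have hl₀' : maxSupport σ = opinionSupport σ l₀ := hl₀
  have hX : ∀ l, opinionSupport (Function.update σ a none) l + (if i = l then 1 else 0)
      = opinionSupport σ l := by
    intro l
    have := opinionSupport_update σ a none l
    rw [h] at this
    simpa using this
  by_cases he : opinionSupport σ i = maxSupport σ
  · have h1 := hX l₀
    have h2 : maxSupport (Function.update σ a none) ≥ opinionSupport (Function.update σ a none) l₀ :=
      opinionSupport_le_maxSupport _ l₀
    rw [if_pos he]
    split_ifs at h1 <;> omega
  · have hne : i ≠ l₀ := by
      intro e; exact he (by rw [e, hl₀'])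
    have h1 := hX l₀
    rw [if_neg hne] at h1
    have h2 : maxSupport (Function.update σ a none) ≥ opinionSupport (Function.update σ a none) l₀ :=
      opinionSupport_le_maxSupport _ l₀
    rw [if_neg he]
    omega

lemma maxSupport_update_some (σ : Fin n → Option (Fin k)) (a : Fin n) (j : Fin k)
    (h : σ a = none) :
    maxSupport σ + (if opinionSupport σ j = maxSupport σ then 1 else 0)
      ≤ maxSupport (Function.update σ a (some j)) := by
  have hX : ∀ l, opinionSupport (Function.update σ a (some j)) l
      = opinionSupport σ l + (if j = l then 1 else 0) := by
    intro l
    have := opinionSupport_update σ a (some j) l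
    rw [h] at this
    simpa using this
  by_cases he : opinionSupport σ j = maxSupport σ
  · have h2 : maxSupport (Function.update σ a (some j)) ≥ opinionSupport (Function.update σ a (some j)) j :=
      opinionSupport_le_maxSupport _ j
    rw [hX j, if_pos rfl, he] at h2
    rw [if_pos he]
    omega
  · rw [if_neg he, add_zero]
    simp only [maxSupport]
    apply Finset.sup_mono_fun
    intro l _
    rw [hX l]
    omega

lemma sum_fin_comp (σ : Fin n → Option (Fin k)) (h : Option (Fin k) → ℝ) :
    ∑ a : Fin n, h (σ a)
      = (undecidedCount σ : ℝ) * h none + ∑ i : Fin k, (opinionSupport σ i : ℝ) * h (some i) := by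
  classical
  rw [← Finset.sum_fiberwise_of_maps_to (t := (Finset.univ : Finset (Option (Fin k))))
      (fun (a : Fin n) (_ : a ∈ Finset.univ) => Finset.mem_univ (σ a)) (fun a => h (σ a))]
  have hfib : ∀ t : Option (Fin k),
      ∑ a ∈ Finset.univ.filter (fun a => σ a = t), h (σ a)
        = ((Finset.univ.filter fun a => σ a = t).card : ℝ) * h t := by
    intro t
    rw [Finset.sum_congr rfl (fun a ha => by rw [(Finset.mem_filter.mp ha).2]),
      Finset.sum_const, nsmul_eq_mul]
  rw [Finset.sum_congr rfl fun t _ => hfib t, Fintype.sum_option]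
  rfl

lemma sum_support_add_undecided (σ : Fin n → Option (Fin k)) :
    (∑ i : Fin k, (opinionSupport σ i : ℝ)) + (undecidedCount σ : ℝ) = n := by
  have h := sum_fin_comp σ (fun _ => (1 : ℝ))
  simp only [mul_one, Finset.sum_const, Finset.card_univ, Fintype.card_fin, nsmul_eq_mul] at h
  rw [add_comm, ← h]

noncomputable def usdG {n k : ℕ} (σ : Fin n → Option (Fin k)) :
    Option (Fin k) → Option (Fin k) → ℝ
  | some i, some j =>
      if i = j then 0 else 2 - (if opinionSupport σ i = maxSupport σ then 1 else 0)
  | none, some j => -2 + (if opinionSupport σ j = maxSupport σ then 1 else 0)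
  | _, none => 0

lemma usdStep_eq_self_of_none_right (σ : Fin n → Option (Fin k)) (a b : Fin n)
    (h : σ b = none) : usdStep σ (a, b) = σ := by
  funext c
  by_cases hc : c = a
  · subst hc
    simp only [usdStep, if_pos rfl, h]
    rcases hσ : σ c with _ | i <;> simp [hσ]
  · simp [usdStep, hc]

lemma usdStep_eq_self_same (σ : Fin n → Option (Fin k)) (a b : Fin n) (i : Fin k)
    (ha : σ a = some i) (hb : σ b = some i) : usdStep σ (a, b) = σ := by
  funext c
  by_cases hc : c = a
  · subst hc
    simp [usdStep, ha, hb]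
  · simp [usdStep, hc]

lemma usdStep_eq_update_none (σ : Fin n → Option (Fin k)) (a b : Fin n) (i j : Fin k)
    (ha : σ a = some i) (hb : σ b = some j) (hij : i ≠ j) :
    usdStep σ (a, b) = Function.update σ a none := by
  funext c
  by_cases hc : c = a
  · subst hc
    simp [usdStep, ha, hb, hij, Function.update_self]
  · simp [usdStep, hc, Function.update_apply]

lemma usdStep_eq_update_some (σ : Fin n → Option (Fin k)) (a b : Fin n) (j : Fin k)
    (ha : σ a = none) (hb : σ b = some j) :
    usdStep σ (a, b) = Function.update σ a (some j) := by
  funext c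
  by_cases hc : c = a
  · subst hc
    simp [usdStep, ha, hb, Function.update_self]
  · simp [usdStep, hc, Function.update_apply]

lemma usdG_le_drop (σ : Fin n → Option (Fin k)) (pr : Fin n × Fin n) :
    usdG σ (σ pr.1) (σ pr.2) ≤ usdPotential σ - usdPotential (usdStep σ pr) := by
  obtain ⟨a, b⟩ := pr
  rcases ha : σ a with _ | i <;> rcases hb : σ b with _ | j
  · rw [usdStep_eq_self_of_none_right σ a b hb]
    simp [usdG, ha, hb]
  · -- none, some j : update to some j
    rw [usdStep_eq_update_some σ a b j ha hb]
    set σ' := Function.update σ a (some j) with hσ'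
    have hu : undecidedCount σ' + 1 = undecidedCount σ := by
      have := undecidedCount_update σ a (some j)
      rw [ha] at this
      simpa using this
    have hM : maxSupport σ + (if opinionSupport σ j = maxSupport σ then 1 else 0)
        ≤ maxSupport σ' := maxSupport_update_some σ a j ha
    simp only [usdG, ha, hb, usdPotential]
    have hu' : (undecidedCount σ' : ℝ) = (undecidedCount σ : ℝ) - 1 := by
      have := congrArg (Nat.cast (R := ℝ)) hu
      push_cast at this
      linarith
    have hM' : (maxSupport σ : ℝ) + (if opinionSupport σ j = maxSupport σ then 1 else 0)
        ≤ (maxSupport σ' : ℝ) := by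
      have := Nat.cast_le (α := ℝ) |>.mpr hM
      push_cast at this
      split_ifs at this ⊢ <;> push_cast at this ⊢ <;> linarith
    rw [hu']
    split_ifs at hM' ⊢ <;> linarith
  · rw [usdStep_eq_self_of_none_right σ a b hb]
    simp [usdG, ha, hb]
  · by_cases hij : i = j
    · subst hij
      rw [usdStep_eq_self_same σ a b i ha hb]
      simp [usdG, ha, hb]
    · rw [usdStep_eq_update_none σ a b i j ha hb hij]
      set σ' := Function.update σ a none with hσ'
      have hu : undecidedCount σ' = undecidedCount σ + 1 := by
        have := undecidedCount_update σ a none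
        rw [ha] at this
        simpa using this
      have hM : maxSupport σ ≤ maxSupport σ'
          + (if opinionSupport σ i = maxSupport σ then 1 else 0) :=
        maxSupport_update_none σ a i ha
      simp only [usdG, ha, hb, usdPotential, if_neg hij]
      have hu' : (undecidedCount σ' : ℝ) = (undecidedCount σ : ℝ) + 1 := by
        exact_mod_cast congrArg (Nat.cast (R := ℝ)) hu
      have hM' : (maxSupport σ : ℝ) ≤ (maxSupport σ' : ℝ)
          + (if opinionSupport σ i = maxSupport σ then 1 else 0) := by
        have := Nat.cast_le (α := ℝ) |>.mpr hM
        split_ifs at this ⊢ <;> push_cast at this ⊢ <;> linarith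
      rw [hu']
      split_ifs at hM' ⊢ <;> linarith


noncomputable def eMax {n k : ℕ} (σ : Fin n → Option (Fin k)) (i : Fin k) : ℝ :=
  if opinionSupport σ i = maxSupport σ then 1 else 0

lemma usdG_none_none (σ : Fin n → Option (Fin k)) : usdG σ none none = 0 := rfl
lemma usdG_some_none (σ : Fin n → Option (Fin k)) (i : Fin k) : usdG σ (some i) none = 0 := rfl
lemma usdG_none_some (σ : Fin n → Option (Fin k)) (j : Fin k) :
    usdG σ none (some j) = -2 + eMax σ j := rfl
lemma usdG_some_some (σ : Fin n → Option (Fin k)) (i j : Fin k) :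
    usdG σ (some i) (some j) = if i = j then 0 else 2 - eMax σ i := rfl

lemma eMax_nonneg (σ : Fin n → Option (Fin k)) (i : Fin k) : 0 ≤ eMax σ i := by
  unfold eMax; split_ifs <;> norm_num

lemma eMax_le_one (σ : Fin n → Option (Fin k)) (i : Fin k) : eMax σ i ≤ 1 := by
  unfold eMax; split_ifs <;> norm_num

lemma eMax_mul (σ : Fin n → Option (Fin k)) (i : Fin k) :
    eMax σ i * (opinionSupport σ i : ℝ) * (opinionSupport σ i : ℝ)
      = eMax σ i * (opinionSupport σ i : ℝ) * (maxSupport σ : ℝ) := by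
  unfold eMax
  split_ifs with h
  · rw [h]
  · ring

lemma sum_usdG_ge (σ : Fin n → Option (Fin k))
    (hZ : 0 ≤ usdPotential σ) (hu : 2 * (undecidedCount σ : ℝ) < n) :
    (n : ℝ) / 2 * usdPotential σ ≤ ∑ pr : Fin n × Fin n, usdG σ (σ pr.1) (σ pr.2) := by
  classical
  set u : ℝ := (undecidedCount σ : ℝ) with hu_def
  set M : ℝ := (maxSupport σ : ℝ) with hM_def
  set A : ℝ := ∑ i : Fin k, (opinionSupport σ i : ℝ) with hA_def
  set S : ℝ := ∑ i : Fin k, eMax σ i * (opinionSupport σ i : ℝ) with hS_def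
  set Q : ℝ := ∑ i : Fin k, (opinionSupport σ i : ℝ) * (opinionSupport σ i : ℝ) with hQ_def
  have key : ∑ pr : Fin n × Fin n, usdG σ (σ pr.1) (σ pr.2)
      = u * (∑ j : Fin k, (opinionSupport σ j : ℝ) * (-2 + eMax σ j))
        + ∑ i : Fin k, (opinionSupport σ i : ℝ)
            * (∑ j : Fin k, (opinionSupport σ j : ℝ) * (if i = j then 0 else 2 - eMax σ i)) := by
    rw [Fintype.sum_prod_type]
    rw [Finset.sum_congr rfl (fun a _ => sum_fin_comp σ (usdG σ (σ a)))]
    rw [sum_fin_comp σ (fun s => u * usdG σ s none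
      + ∑ j : Fin k, (opinionSupport σ j : ℝ) * usdG σ s (some j))]
    simp only [usdG_none_none, usdG_some_none, usdG_none_some, usdG_some_some,
      mul_zero, zero_add, add_zero]
    rfl
  have hS1 : ∑ j : Fin k, (opinionSupport σ j : ℝ) * (-2 + eMax σ j) = -2 * A + S := by
    rw [Finset.sum_congr rfl (fun j _ => by
      show (opinionSupport σ j : ℝ) * (-2 + eMax σ j)
        = -2 * (opinionSupport σ j : ℝ) + eMax σ j * (opinionSupport σ j : ℝ)
      ring)]
    rw [Finset.sum_add_distrib, ← Finset.mul_sum, hA_def, hS_def]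
  have hS2 : ∀ i : Fin k,
      ∑ j : Fin k, (opinionSupport σ j : ℝ) * (if i = j then 0 else 2 - eMax σ i)
        = (2 - eMax σ i) * (A - (opinionSupport σ i : ℝ)) := by
    intro i
    have hpt : ∀ j : Fin k, (opinionSupport σ j : ℝ) * (if i = j then 0 else 2 - eMax σ i)
        = (opinionSupport σ j : ℝ) * (2 - eMax σ i)
          - (if i = j then (opinionSupport σ j : ℝ) * (2 - eMax σ i) else 0) := by
      intro j; split_ifs <;> ring
    rw [Finset.sum_congr rfl (fun j _ => hpt j), Finset.sum_sub_distrib,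
      Finset.sum_ite_eq Finset.univ i (fun j => (opinionSupport σ j : ℝ) * (2 - eMax σ i)),
      if_pos (Finset.mem_univ i), ← Finset.sum_mul, ← hA_def]
    ring
  have hS3 : ∑ i : Fin k, (opinionSupport σ i : ℝ)
        * ((2 - eMax σ i) * (A - (opinionSupport σ i : ℝ)))
      = 2 * A * A - 2 * Q - A * S + M * S := by
    have hterm : ∀ i : Fin k, (opinionSupport σ i : ℝ)
          * ((2 - eMax σ i) * (A - (opinionSupport σ i : ℝ)))
        = (2 * A) * (opinionSupport σ i : ℝ)
          - 2 * ((opinionSupport σ i : ℝ) * (opinionSupport σ i : ℝ))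
          - A * (eMax σ i * (opinionSupport σ i : ℝ))
          + M * (eMax σ i * (opinionSupport σ i : ℝ)) := by
      intro i
      have h := eMax_mul σ i
      rw [hM_def]
      nlinarith [eMax_mul σ i]
    rw [Finset.sum_congr rfl (fun i _ => hterm i)]
    rw [Finset.sum_add_distrib, Finset.sum_sub_distrib, Finset.sum_sub_distrib,
      ← Finset.mul_sum, ← Finset.mul_sum, ← Finset.mul_sum, ← Finset.mul_sum,
      ← hA_def, ← hS_def, ← hQ_def]
  have hsum2 : ∑ i : Fin k, (opinionSupport σ i : ℝ)
        * (∑ j : Fin k, (opinionSupport σ j : ℝ) * (if i = j then 0 else 2 - eMax σ i))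
      = ∑ i : Fin k, (opinionSupport σ i : ℝ)
        * ((2 - eMax σ i) * (A - (opinionSupport σ i : ℝ))) :=
    Finset.sum_congr rfl (fun i _ => by rw [hS2 i])
  rw [key, hsum2, hS1, hS3]
  -- now purely algebraic
  have hA_u : A + u = (n : ℝ) := sum_support_add_undecided σ
  have hXle : ∀ i : Fin k, (opinionSupport σ i : ℝ) ≤ M := by
    intro i
    exact_mod_cast Nat.cast_le.mpr (opinionSupport_le_maxSupport σ i)
  have hX0 : ∀ i : Fin k, (0 : ℝ) ≤ (opinionSupport σ i : ℝ) := fun i => Nat.cast_nonneg _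
  have hQle : Q ≤ M * A := by
    rw [hQ_def, hA_def, Finset.mul_sum]
    apply Finset.sum_le_sum
    intro i _
    exact mul_le_mul_of_nonneg_right (hXle i) (hX0 i)
  have hSle : S ≤ A := by
    rw [hS_def, hA_def]
    apply Finset.sum_le_sum
    intro i _
    calc eMax σ i * (opinionSupport σ i : ℝ) ≤ 1 * (opinionSupport σ i : ℝ) :=
          mul_le_mul_of_nonneg_right (eMax_le_one σ i) (hX0 i)
      _ = (opinionSupport σ i : ℝ) := one_mul _
  have hZ' : 0 ≤ (n : ℝ) - 2 * u - M := hZ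
  have hu0 : (0 : ℝ) ≤ u := Nat.cast_nonneg _
  have hM0 : (0 : ℝ) ≤ M := Nat.cast_nonneg _
  have hPot : usdPotential σ = (n : ℝ) - 2 * u - M := rfl
  rw [hPot]
  have hAS : 0 ≤ A - S := by linarith
  have h2An : 0 ≤ 2 * A - (n : ℝ) := by linarith
  nlinarith [mul_nonneg hZ' hAS, mul_nonneg hZ' h2An, hQle]

end

/-- For the potential `Z(t) = n - 2u(t) - x_max(t)` of the USD: if
`Z(t) ≥ 0` and `u(t) < n/2`, then the expected one-step decrease of the potential
(over a uniformly random ordered interaction) is at least `Z(t)/(2n)`. -/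
theorem usd_potential_drift
    {n k : ℕ} (hn : 0 < n) (σ : Fin n → Option (Fin k))
    (hZ : 0 ≤ usdPotential σ)
    (hu : 2 * (undecidedCount σ : ℝ) < n) :
    usdPotential σ / (2 * n)
      ≤ (∑ pr : Fin n × Fin n, (usdPotential σ - usdPotential (usdStep σ pr))) / n ^ 2 := by
  have hn' : (0 : ℝ) < n := by exact_mod_cast hn
  have h1 : (n : ℝ) / 2 * usdPotential σ ≤ ∑ pr : Fin n × Fin n, usdG σ (σ pr.1) (σ pr.2) :=
    sum_usdG_ge σ hZ hu
  have h2 : ∑ pr : Fin n × Fin n, usdG σ (σ pr.1) (σ pr.2)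
      ≤ ∑ pr : Fin n × Fin n, (usdPotential σ - usdPotential (usdStep σ pr)) :=
    Finset.sum_le_sum fun pr _ => usdG_le_drop σ pr
  rw [div_le_div_iff₀ (by positivity) (by positivity)]
  nlinarith [h1, h2]
end

section
/- Consider two runs of the Undecided State Dynamics on $n$ agents: one with $k$ opinions starting from configuration $\mathbf{x}(0)$, and one with $2$ opinions starting from $\tilde{x}_1(0) = x_1(0)$, $\tilde{x}_2(0) = \sum_{i=2}^k x_i(0)$, and $\tilde{u}(0) = u(0)$. Then there exists a coupling of the two processes such that for all $t \geq 0$: $x_1(t) \geq \tilde{x}_1(t)$ and $x_1(t) + u(t) \geq \tilde{x}_1(t) + \tilde{u}(t)$. -/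
open MeasureTheory ProbabilityTheory
open Set
open scoped ENNReal

/-- The USD process driven by a given sequence of interaction pairs. -/
def usdEvolve {n k : ℕ} (σ₀ : Fin n → Option (Fin k)) (ρ : ℕ → Fin n × Fin n) :
    ℕ → Fin n → Option (Fin k)
  | 0 => σ₀
  | t + 1 => usdStep (usdEvolve σ₀ ρ t) (ρ t)

/-- existence of a permutation matching fibers -/
theorem exists_perm_fiber {β γ : Type*} [Fintype β] [DecidableEq β] [DecidableEq γ]
    (f g : β → γ)
    (h : ∀ c, (Finset.univ.filter fun a => f a = c).card
      = (Finset.univ.filter fun a => g a = c).card) :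
    ∃ e : Equiv.Perm β, ∀ a, g (e a) = f a := by
  classical
  have hcard : ∀ c, Fintype.card {a // f a = c} = Fintype.card {a // g a = c} := by
    intro c
    simp only [Fintype.card_subtype]
    exact h c
  let E : ∀ c, {a // f a = c} ≃ {a // g a = c} := fun c => Fintype.equivOfCardEq (hcard c)
  refine ⟨((Equiv.sigmaFiberEquiv f).symm.trans (Equiv.sigmaCongrRight E)).trans
    (Equiv.sigmaFiberEquiv g), fun a => ?_⟩
  exact (E (f a) ⟨a, rfl⟩).2

/-- the coupling relation -/
def usdRel {k : ℕ} (hk : 0 < k) : Option (Fin 2) → Option (Fin k) → Prop := fun b a =>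
  (b = some 0 → a = some ⟨0, hk⟩) ∧ (b = none → a = none ∨ a = some ⟨0, hk⟩)

theorem usdRel_step {n k : ℕ} (hk : 0 < k) (τ : Fin n → Option (Fin 2))
    (σ : Fin n → Option (Fin k)) (pr : Fin n × Fin n)
    (h : ∀ a, usdRel hk (τ a) (σ a)) (a : Fin n) :
    usdRel hk (usdStep τ pr a) (usdStep σ pr a) := by
  unfold usdStep
  by_cases ha : a = pr.1
  · simp only [if_pos ha]
    have h1 := h pr.1
    have h2 := h pr.2
    rcases hb1 : τ pr.1 with _ | b1 <;> rcases hb2 : τ pr.2 with _ | b2 <;>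
      rcases hs1 : σ pr.1 with _ | s1 <;> rcases hs2 : σ pr.2 with _ | s2 <;>
      simp only [hb1, hb2, hs1, hs2, usdRel] at h1 h2 ⊢ <;>
      try simp_all
    all_goals (fin_cases b1 <;> try fin_cases b2) <;>
      (try split_ifs) <;> (try simp_all) <;> try omega
  · simp only [if_neg ha]
    exact h a

theorem usdStep_perm {n k : ℕ} (σ : Fin n → Option (Fin k)) (π : Equiv.Perm (Fin n))
    (x y : Fin n) (a : Fin n) :
    usdStep σ (π x, π y) (π a) = usdStep (fun b => σ (π b)) (x, y) a := by
  unfold usdStep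
  simp [EmbeddingLike.apply_eq_iff_eq]

theorem usdEvolve_perm {n k : ℕ} (σ₀ : Fin n → Option (Fin k)) (π : Equiv.Perm (Fin n))
    (ρ : ℕ → Fin n × Fin n) (t : ℕ) (a : Fin n) :
    usdEvolve σ₀ (fun s => (π (ρ s).1, π (ρ s).2)) t (π a)
      = usdEvolve (fun b => σ₀ (π b)) ρ t a := by
  induction t generalizing a with
  | zero => rfl
  | succ t ih =>
    have hfun : (fun b => usdEvolve σ₀ (fun s => (π (ρ s).1, π (ρ s).2)) t (π b))
        = usdEvolve (fun b => σ₀ (π b)) ρ t := funext fun b => ih b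
    show usdStep (usdEvolve σ₀ (fun s => (π (ρ s).1, π (ρ s).2)) t)
        (π (ρ t).1, π (ρ t).2) (π a) = _
    rw [usdStep_perm, hfun]
    rfl

theorem opinionSupport_perm {n k : ℕ} (σ : Fin n → Option (Fin k)) (π : Equiv.Perm (Fin n))
    (i : Fin k) : opinionSupport (fun a => σ (π a)) i = opinionSupport σ i := by
  unfold opinionSupport
  rw [← Fintype.card_subtype, ← Fintype.card_subtype]
  exact Fintype.card_congr (π.subtypeEquiv fun a => Iff.rfl)

theorem undecidedCount_perm {n k : ℕ} (σ : Fin n → Option (Fin k)) (π : Equiv.Perm (Fin n)) :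
    undecidedCount (fun a => σ (π a)) = undecidedCount σ := by
  unfold undecidedCount
  rw [← Fintype.card_subtype, ← Fintype.card_subtype]
  exact Fintype.card_congr (π.subtypeEquiv fun a => Iff.rfl)

theorem usdRel_counts {n k : ℕ} (hk : 0 < k) (τ : Fin n → Option (Fin 2))
    (σ : Fin n → Option (Fin k)) (h : ∀ a, usdRel hk (τ a) (σ a)) :
    opinionSupport τ 0 ≤ opinionSupport σ ⟨0, hk⟩ ∧
    opinionSupport τ 0 + undecidedCount τ
      ≤ opinionSupport σ ⟨0, hk⟩ + undecidedCount σ := by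
  constructor
  · apply Finset.card_le_card
    intro a ha
    rw [Finset.mem_filter] at ha ⊢
    exact ⟨ha.1, (h a).1 ha.2⟩
  · have hd1 : Disjoint (Finset.univ.filter fun a => τ a = some 0)
        (Finset.univ.filter fun a => τ a = none) := by
      rw [Finset.disjoint_filter]
      intro a _ h1 h2
      simp [h1] at h2
    have e1 : opinionSupport τ 0 + undecidedCount τ
        = (Finset.univ.filter fun a => τ a = some 0 ∨ τ a = none).card := by
      unfold opinionSupport undecidedCount
      rw [Finset.filter_or, Finset.card_union_of_disjoint hd1]
    have hd2 : Disjoint (Finset.univ.filter fun a => σ a = some ⟨0, hk⟩)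
        (Finset.univ.filter fun a => σ a = none) := by
      rw [Finset.disjoint_filter]
      intro a _ h1 h2
      simp [h1] at h2
    have e2 : opinionSupport σ ⟨0, hk⟩ + undecidedCount σ
        = (Finset.univ.filter fun a => σ a = some ⟨0, hk⟩ ∨ σ a = none).card := by
      unfold opinionSupport undecidedCount
      rw [Finset.filter_or, Finset.card_union_of_disjoint hd2]
    rw [e1, e2]
    apply Finset.card_le_card
    intro a ha
    rw [Finset.mem_filter] at ha ⊢
    refine ⟨ha.1, ?_⟩
    rcases ha.2 with h1 | h1
    · exact Or.inl ((h a).1 h1)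
    · rcases (h a).2 h1 with h2 | h2
      · exact Or.inr h2
      · exact Or.inl h2

theorem exists_iid_uniform (α : Type) [Fintype α] [Nonempty α] [MeasurableSpace α]
    [MeasurableSingletonClass α] :
    ∃ (Ω : Type) (mΩ : MeasurableSpace Ω) (μ : Measure Ω) (f : ℕ → Ω → α),
      IsProbabilityMeasure μ ∧ (∀ t, Measurable (f t)) ∧
      iIndepFun f μ ∧
      (∀ (t : ℕ) (c : α), μ {ω | f t ω = c} = (Fintype.card α : ℝ≥0∞)⁻¹) := by
  classical
  set M := Fintype.card α with hM
  haveI : NeZero M := ⟨Fintype.card_ne_zero⟩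
  have ecard : Fintype.card (ZMod M) = Fintype.card α := by rw [ZMod.card]
  let e : ZMod M ≃ α := Fintype.equivOfCardEq ecard
  letI : TopologicalSpace (ZMod M) := ⊥
  haveI : DiscreteTopology (ZMod M) := ⟨rfl⟩
  haveI : IsTopologicalAddGroup (ZMod M) :=
    { continuous_add := continuous_of_discreteTopology
      continuous_neg := continuous_of_discreteTopology }
  letI Ω := ℕ → ZMod M
  letI mΩ : MeasurableSpace Ω := borel Ω
  haveI : BorelSpace Ω := ⟨rfl⟩
  let K₀ : TopologicalSpace.PositiveCompacts Ω := ⊤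
  let μ : Measure Ω := Measure.addHaarMeasure K₀
  haveI hprob : IsProbabilityMeasure μ := by
    constructor
    have : (K₀ : Set Ω) = univ := TopologicalSpace.PositiveCompacts.coe_top
    rw [← this]
    exact Measure.addHaarMeasure_self
  -- key cylinder computation
  have key : ∀ (S : Finset ℕ) (v : ℕ → ZMod M),
      μ {ω : Ω | ∀ i ∈ S, ω i = v i} = ((M : ℝ≥0∞) ^ S.card)⁻¹ := by
    intro S v
    have hmeas : ∀ (w : ℕ → ZMod M), MeasurableSet {ω : Ω | ∀ i ∈ S, ω i = w i} := by
      intro w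
      have : {ω : Ω | ∀ i ∈ S, ω i = w i} = ⋂ i ∈ S, (fun ω : Ω => ω i) ⁻¹' {w i} := by
        ext ω; simp
      rw [this]
      exact MeasurableSet.biInter S.countable_toSet fun i _ =>
        ((isClosed_discrete _).preimage (continuous_apply i)).measurableSet
    have htrans : ∀ (w : ℕ → ZMod M),
        μ {ω : Ω | ∀ i ∈ S, ω i = w i} = μ {ω : Ω | ∀ i ∈ S, ω i = 0} := by
      intro w
      have hset : {ω : Ω | ∀ i ∈ S, ω i = w i}
          = (fun ω : Ω => (-w) + ω) ⁻¹' {ω : Ω | ∀ i ∈ S, ω i = 0} := by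
        ext ω
        simp only [Set.mem_setOf_eq, Set.mem_preimage, Pi.add_apply, Pi.neg_apply]
        constructor
        · intro h i hi
          have : (-w + ω) i = -w i + ω i := rfl
          rw [this, h i hi, neg_add_cancel]
        · intro h i hi
          have h2 := h i hi
          have : (-w + ω) i = -w i + ω i := rfl
          rw [this, neg_add_eq_zero] at h2
          exact h2.symm
      rw [hset, measure_preimage_add]
    -- partition into fibers over restrictions
    let A : (S → ZMod M) → Set Ω := fun w => {ω : Ω | ∀ i ∈ S, ω i = if h : i ∈ S then w ⟨i, h⟩ else 0}
    have hAμ : ∀ w, μ (A w) = μ {ω : Ω | ∀ i ∈ S, ω i = 0} := fun w => htrans _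
    have hdisj : Pairwise (Function.onFun Disjoint A) := by
      intro w w' hne
      rw [Function.onFun, Set.disjoint_left]
      rintro ω hω hω'
      apply hne
      funext i
      have h1 := hω (i : ℕ) i.2
      have h2 := hω' (i : ℕ) i.2
      rw [dif_pos i.2] at h1 h2
      rw [← h1, ← h2]
    have hunion : ⋃ w, A w = univ := by
      apply Set.eq_univ_of_forall
      intro ω
      exact Set.mem_iUnion.2 ⟨fun i => ω i, fun i hi => by rw [dif_pos hi]⟩
    have hsum : ∑' w : S → ZMod M, μ (A w) = 1 := by
      rw [← measure_iUnion hdisj fun w => hmeas _, hunion, measure_univ]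
    rw [tsum_fintype] at hsum
    simp only [hAμ, Finset.sum_const, Finset.card_univ, nsmul_eq_mul] at hsum
    have hcard : Fintype.card (S → ZMod M) = M ^ S.card := by
      rw [Fintype.card_fun, ZMod.card, Fintype.card_coe]
    rw [hcard] at hsum
    have hx : ((M : ℝ≥0∞) ^ S.card) * μ {ω : Ω | ∀ i ∈ S, ω i = 0} = 1 := by
      rw [← hsum]; push_cast; ring
    have hne0 : ((M : ℝ≥0∞) ^ S.card) ≠ 0 := by
      positivity
    have hnetop : ((M : ℝ≥0∞) ^ S.card) ≠ ⊤ := by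
      exact ENNReal.pow_ne_top (ENNReal.natCast_ne_top M)
    rw [htrans v]
    rw [← one_mul (((M : ℝ≥0∞) ^ S.card)⁻¹), ← hx, mul_comm (((M : ℝ≥0∞) ^ S.card)) _,
      mul_assoc, ENNReal.mul_inv_cancel hne0 hnetop, mul_one]
  let f : ℕ → Ω → α := fun t ω => e (ω t)
  have hfmeas : ∀ t, Measurable (f t) := by
    intro t A hA
    have : f t ⁻¹' A = (fun ω : Ω => ω t) ⁻¹' (e ⁻¹' A) := rfl
    rw [this]
    exact ((isClosed_discrete _).preimage (continuous_apply t)).measurableSet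
  have hsingle : ∀ (t : ℕ) (c : α), μ {ω | f t ω = c} = (Fintype.card α : ℝ≥0∞)⁻¹ := by
    intro t c
    have hset : {ω | f t ω = c} = {ω : Ω | ∀ i ∈ ({t} : Finset ℕ), ω i = e.symm c} := by
      ext ω
      simp [f, Equiv.eq_symm_apply, eq_comm]
    rw [hset, key, Finset.card_singleton, pow_one, hM]
  refine ⟨Ω, mΩ, μ, f, hprob, hfmeas, ?_, hsingle⟩
  -- independence
  have hmα : (‹MeasurableSpace α› : MeasurableSpace α)
      = MeasurableSpace.generateFrom {s : Set α | ∃ c, s = {c}} := by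
    apply le_antisymm
    · intro s _
      have : s = ⋃ c ∈ s, {c} := by simp
      rw [this]
      exact MeasurableSet.biUnion s.to_countable fun c _ =>
        MeasurableSpace.measurableSet_generateFrom ⟨c, rfl⟩
    · rw [MeasurableSpace.generateFrom_le_iff]
      rintro s ⟨c, rfl⟩
      exact measurableSet_singleton c
  let π : ℕ → Set (Set Ω) := fun t => Set.range fun c : α => f t ⁻¹' {c}
  have hpi : ∀ t, IsPiSystem (π t) := by
    rintro t _ ⟨c, rfl⟩ _ ⟨c', rfl⟩ hne
    obtain ⟨ω, hω, hω'⟩ := hne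
    simp only [Set.mem_preimage, Set.mem_singleton_iff] at hω hω'
    have : c = c' := by rw [← hω, ← hω']
    subst this
    simpa using ⟨c, rfl⟩
  have hgen : ∀ t, MeasurableSpace.comap (f t) ‹MeasurableSpace α›
      = MeasurableSpace.generateFrom (π t) := by
    intro t
    rw [hmα, MeasurableSpace.comap_generateFrom]
    congr 1
    ext s
    constructor
    · rintro ⟨_, ⟨c, rfl⟩, rfl⟩; exact ⟨c, rfl⟩
    · rintro ⟨c, rfl⟩; exact ⟨{c}, ⟨c, rfl⟩, rfl⟩
  have hle : ∀ t, MeasurableSpace.comap (f t) ‹MeasurableSpace α› ≤ mΩ := fun t =>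
    (hfmeas t).comap_le
  have hsets : iIndepSets π μ := by
    rw [iIndepSets_iff]
    intro S s hs
    choose c hc using fun i (hi : i ∈ S) => hs i hi
    let v : ℕ → ZMod M := fun i => if hi : i ∈ S then e.symm (c i hi) else 0
    have hinter : (⋂ i ∈ S, s i) = {ω : Ω | ∀ i ∈ S, ω i = v i} := by
      ext ω
      simp only [Set.mem_iInter, Set.mem_setOf_eq]
      apply forall_congr'; intro i
      by_cases hi : i ∈ S
      · simp only [hi, forall_true_left, v, dif_pos hi, ← hc i hi]
        simp [f, Equiv.eq_symm_apply, eq_comm]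
      · simp [hi]
    have hterm : ∀ i ∈ S, μ (s i) = (M : ℝ≥0∞)⁻¹ := by
      intro i hi
      rw [← hc i hi]
      exact hsingle i (c i hi)
    rw [hinter, key, Finset.prod_congr rfl hterm, Finset.prod_const, ← ENNReal.inv_pow]
  rw [iIndepFun_iff_iIndep]
  exact iIndepSets.iIndep hle π hpi hgen hsets

/-- Consider the USD with `k` opinions started from `σ₀` and the USD with
`2` opinions started from `τ₀`, where `x̃₁(0) = x₁(0)`, `x̃₂(0) = ∑_{i ≥ 2} xᵢ(0)` and
`ũ(0) = u(0)`. Then there is a coupling of the two processes (each driven by i.i.d.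
uniformly random ordered interaction pairs) such that for all times `t`:
`x₁(t) ≥ x̃₁(t)` and `x₁(t) + u(t) ≥ x̃₁(t) + ũ(t)`. -/
theorem usd_two_opinion_coupling
    (n k : ℕ) (hn : 0 < n) (hk : 0 < k)
    (σ₀ : Fin n → Option (Fin k)) (τ₀ : Fin n → Option (Fin 2))
    (h1 : opinionSupport τ₀ 0 = opinionSupport σ₀ ⟨0, hk⟩)
    (h2 : opinionSupport τ₀ 1
      = ∑ i ∈ Finset.univ.filter (fun i : Fin k => i ≠ ⟨0, hk⟩), opinionSupport σ₀ i)
    (hu : undecidedCount τ₀ = undecidedCount σ₀) :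
    ∃ (Ω : Type) (_ : MeasurableSpace Ω) (μ : Measure Ω)
      (ρ₁ ρ₂ : ℕ → Ω → Fin n × Fin n),
      IsProbabilityMeasure μ ∧
      (∀ t, Measurable (ρ₁ t)) ∧ (∀ t, Measurable (ρ₂ t)) ∧
      iIndepFun ρ₁ μ ∧
      iIndepFun ρ₂ μ ∧
      (∀ (t : ℕ) (pr : Fin n × Fin n), μ {ω | ρ₁ t ω = pr} = ((n : ℝ≥0∞) ^ 2)⁻¹) ∧
      (∀ (t : ℕ) (pr : Fin n × Fin n), μ {ω | ρ₂ t ω = pr} = ((n : ℝ≥0∞) ^ 2)⁻¹) ∧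
      (∀ (ω : Ω) (t : ℕ),
        opinionSupport (usdEvolve τ₀ (fun s => ρ₂ s ω) t) 0
          ≤ opinionSupport (usdEvolve σ₀ (fun s => ρ₁ s ω) t) ⟨0, hk⟩ ∧
        opinionSupport (usdEvolve τ₀ (fun s => ρ₂ s ω) t) 0
            + undecidedCount (usdEvolve τ₀ (fun s => ρ₂ s ω) t)
          ≤ opinionSupport (usdEvolve σ₀ (fun s => ρ₁ s ω) t) ⟨0, hk⟩
            + undecidedCount (usdEvolve σ₀ (fun s => ρ₁ s ω) t)) := by
  classical
  haveI : NeZero n := ⟨hn.ne'⟩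
  -- construct the matching permutation
  let F : Fin n → Fin 3 := fun a =>
    if τ₀ a = some 0 then 0 else if τ₀ a = none then 1 else 2
  let G : Fin n → Fin 3 := fun a =>
    if σ₀ a = some ⟨0, hk⟩ then 0 else if σ₀ a = none then 1 else 2
  have hF0 : (Finset.univ.filter fun a => F a = 0) = Finset.univ.filter fun a => τ₀ a = some 0 := by
    ext a; simp only [Finset.mem_filter, F]; split_ifs with hi hi2 <;> simp_all
  have hF1 : (Finset.univ.filter fun a => F a = 1) = Finset.univ.filter fun a => τ₀ a = none := by
    ext a; simp only [Finset.mem_filter, F]; split_ifs with hi hi2 <;> simp_all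
  have hG0 : (Finset.univ.filter fun a => G a = 0)
      = Finset.univ.filter fun a => σ₀ a = some ⟨0, hk⟩ := by
    ext a; simp only [Finset.mem_filter, G]; split_ifs with hi hi2 <;> simp_all
  have hG1 : (Finset.univ.filter fun a => G a = 1) = Finset.univ.filter fun a => σ₀ a = none := by
    ext a; simp only [Finset.mem_filter, G]; split_ifs with hi hi2 <;> simp_all
  have htotF : ∑ c : Fin 3, (Finset.univ.filter fun a => F a = c).card = n := by
    rw [← Finset.card_eq_sum_card_fiberwise (fun a _ => Finset.mem_univ (F a))]
    simp
  have htotG : ∑ c : Fin 3, (Finset.univ.filter fun a => G a = c).card = n := by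
    rw [← Finset.card_eq_sum_card_fiberwise (fun a _ => Finset.mem_univ (G a))]
    simp
  have hfib : ∀ c, (Finset.univ.filter fun a => F a = c).card
      = (Finset.univ.filter fun a => G a = c).card := by
    have e0 : (Finset.univ.filter fun a => F a = 0).card
        = (Finset.univ.filter fun a => G a = 0).card := by
      rw [hF0, hG0]; exact h1
    have e1 : (Finset.univ.filter fun a => F a = 1).card
        = (Finset.univ.filter fun a => G a = 1).card := by
      rw [hF1, hG1]; exact hu
    have e2 : (Finset.univ.filter fun a => F a = 2).card
        = (Finset.univ.filter fun a => G a = 2).card := by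
      rw [Fin.sum_univ_three] at htotF htotG
      omega
    intro c
    fin_cases c
    · exact e0
    · exact e1
    · exact e2
  obtain ⟨π, hπ⟩ := exists_perm_fiber F G hfib
  have h0 : ∀ a, usdRel hk (τ₀ a) (σ₀ (π a)) := by
    intro a
    have hπa := hπ a
    constructor
    · intro hb
      simp only [F, G, hb, if_pos rfl] at hπa
      by_cases hσ : σ₀ (π a) = some ⟨0, hk⟩
      · exact hσ
      · rw [if_neg hσ] at hπa
        split_ifs at hπa <;> simp_all
    · intro hb
      simp only [F, G, hb] at hπa
      norm_num at hπa
      by_cases hσ : σ₀ (π a) = some ⟨0, hk⟩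
      · exact Or.inr hσ
      · rw [if_neg hσ] at hπa
        split_ifs at hπa <;> simp_all
  -- the iid driving sequence
  obtain ⟨Ω, mΩ, μ, f, hprob, hfmeas, hindep, hsingle⟩ :=
    exists_iid_uniform (Fin n × Fin n)
  have hcard : (Fintype.card (Fin n × Fin n) : ℝ≥0∞)⁻¹ = ((n : ℝ≥0∞) ^ 2)⁻¹ := by
    rw [Fintype.card_prod, Fintype.card_fin, Nat.cast_mul, sq]
  let g : Fin n × Fin n → Fin n × Fin n := fun pr => (π pr.1, π pr.2)
  have hgmeas : Measurable g := measurable_of_countable g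
  refine ⟨Ω, mΩ, μ, fun t ω => g (f t ω), f, hprob, ?_, hfmeas, ?_, hindep, ?_, ?_, ?_⟩
  · exact fun t => hgmeas.comp (hfmeas t)
  · exact hindep.comp (fun _ => g) (fun _ => hgmeas)
  · intro t pr
    have : {ω | g (f t ω) = pr} = {ω | f t ω = (π.symm pr.1, π.symm pr.2)} := by
      ext ω
      simp only [Set.mem_setOf_eq, g, Prod.ext_iff, Equiv.apply_eq_iff_eq_symm_apply]
    rw [this, hsingle, hcard]
  · intro t pr
    rw [hsingle, hcard]
  · intro ω t
    have hinv : ∀ t a, usdRel hk (usdEvolve τ₀ (fun s => f s ω) t a)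
        (usdEvolve (fun b => σ₀ (π b)) (fun s => f s ω) t a) := by
      intro t
      induction t with
      | zero => exact h0
      | succ t ih => exact usdRel_step hk _ _ _ ih
    have hev : usdEvolve σ₀ (fun s => g (f s ω)) t
        = fun b => usdEvolve (fun b => σ₀ (π b)) (fun s => f s ω) t (π.symm b) := by
      funext b
      have := usdEvolve_perm σ₀ π (fun s => f s ω) t (π.symm b)
      rw [Equiv.apply_symm_apply] at this
      exact this
    rw [hev, opinionSupport_perm _ π.symm, undecidedCount_perm _ π.symm]
    exact usdRel_counts hk _ _ (hinv t)
end
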